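/- arXiv:2305.13209 — 6 statements merged into one kernel-verified Lean document; each statement's English description precedes it below -/
import Mathlib

section
/- Let β₀ > 0 and let (a_t)_{t∈ℕ} be a sequence of nonnegative reals satisfying a_{t+1} ≤ β₀ + (1/2) a_t^{3/2} for all t, with a₀ ≤ 16/9. Then there exist a universal constant c > 0 and an index T with T ≤ c · max{1, log(log(1/β₀))} such that a_T ≤ 6β₀. -/
open Real

private lemma rpow_three_halves {x : ℝ} (hx : 0 ≤ x) :
    x ^ ((3:ℝ)/2) = x * Real.sqrt x := by
  rcases hx.eq_or_lt with h | h
  · rw [← h, Real.zero_rpow (by norm_num)]; simp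
  · rw [Real.sqrt_eq_rpow]
    nth_rewrite 2 [← Real.rpow_one x]
    rw [← Real.rpow_add h]
    norm_num

private lemma sqrt_add_le' {x y : ℝ} (hx : 0 ≤ x) (hy : 0 ≤ y) :
    Real.sqrt (x + y) ≤ Real.sqrt x + Real.sqrt y := by
  have h1 := Real.sq_sqrt hx
  have h2 := Real.sq_sqrt hy
  have h3 := Real.sqrt_nonneg x
  have h4 := Real.sqrt_nonneg y
  have h : x + y ≤ (Real.sqrt x + Real.sqrt y)^2 := by nlinarith
  calc Real.sqrt (x+y) ≤ Real.sqrt ((Real.sqrt x + Real.sqrt y)^2) := Real.sqrt_le_sqrt h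
    _ = _ := Real.sqrt_sq (by positivity)

noncomputable def vSeq : ℕ → ℝ := fun k => Real.exp (-(Real.log 2) * (3/2:ℝ)^k)

lemma vSeq_zero : vSeq 0 = 1/2 := by
  simp [vSeq, Real.exp_neg, Real.exp_log]

lemma vSeq_pos (k : ℕ) : 0 < vSeq k := Real.exp_pos _

lemma vSeq_succ (k : ℕ) : vSeq (k+1) = vSeq k * Real.sqrt (vSeq k) := by
  unfold vSeq
  rw [← Real.exp_half, ← Real.exp_add]
  congr 1
  ring

lemma vSeq_le_half (k : ℕ) : vSeq k ≤ 1/2 := by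
  have h2 : (0:ℝ) < Real.log 2 := Real.log_pos (by norm_num)
  have hp : (1:ℝ) ≤ (3/2:ℝ)^k := one_le_pow₀ (by norm_num)
  have : -(Real.log 2) * (3/2:ℝ)^k ≤ -(Real.log 2) := by nlinarith
  calc vSeq k ≤ Real.exp (-(Real.log 2)) := Real.exp_le_exp.2 this
    _ = 1/2 := by rw [Real.exp_neg, Real.exp_log] <;> norm_num

set_option maxHeartbeats 1000000 in
/-- Let `β₀ > 0` and let `(a_t)` be a sequence of nonnegative reals with
`a_{t+1} ≤ β₀ + (1/2) a_t^{3/2}` for all `t` and `a₀ ≤ 16/9`. Then there is a universal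
constant `c > 0` and an index `T ≤ c · max{1, log log(1/β₀)}` with `a_T ≤ 6 β₀`. -/
theorem seq_reaches_order_beta :
    ∃ c : ℝ, 0 < c ∧
      ∀ β₀ : ℝ, 0 < β₀ →
        ∀ a : ℕ → ℝ, (∀ t, 0 ≤ a t) →
          (∀ t, a (t + 1) ≤ β₀ + (1 / 2) * a t ^ ((3 : ℝ) / 2)) →
          a 0 ≤ 16 / 9 →
          ∃ T : ℕ, (T : ℝ) ≤ c * max 1 (Real.log (Real.log (1 / β₀))) ∧ a T ≤ 6 * β₀ := by
  classical
  refine ⟨30, by norm_num, ?_⟩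
  intro β₀ hβ a ha h h0
  have hrec : ∀ t, a (t+1) ≤ β₀ + a t * Real.sqrt (a t) / 2 := by
    intro t
    have ht := h t
    rw [rpow_three_halves (ha t)] at ht
    linarith
  have hmax : (1:ℝ) ≤ max 1 (Real.log (Real.log (1/β₀))) := le_max_left _ _
  by_cases hE : ∃ t, t ≤ 13 ∧ a t ≤ 6*β₀
  · obtain ⟨t, ht, hat⟩ := hE
    refine ⟨t, ?_, hat⟩
    have htt : (t:ℝ) ≤ 13 := by exact_mod_cast ht
    nlinarith
  · push_neg at hE
    have hcontr : ∀ t, a t ≤ 16/9 → 6*β₀ < a t → a (t+1) ≤ 5/6 * a t := by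
      intro t h1 h2
      have hs : Real.sqrt (a t) ≤ 4/3 := by
        have := Real.sq_sqrt (ha t)
        have := Real.sqrt_nonneg (a t)
        nlinarith
      have := hrec t
      nlinarith [Real.sqrt_nonneg (a t), ha t]
    have hgeo : ∀ t, t ≤ 13 → a t ≤ (5/6:ℝ)^t * (16/9) := by
      intro t
      induction t with
      | zero => intro _; simpa using h0
      | succ n ih =>
        intro hn
        have hn' : n ≤ 13 := by omega
        have ihn := ih hn'
        have hp1 : (5/6:ℝ)^n ≤ 1 := pow_le_one₀ (by norm_num) (by norm_num)
        have h1 : a n ≤ 16/9 := by nlinarith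
        have h2 := hcontr n h1 (hE n hn')
        calc a (n+1) ≤ 5/6 * a n := h2
          _ ≤ 5/6 * ((5/6:ℝ)^n * (16/9)) := by nlinarith
          _ = (5/6:ℝ)^(n+1) * (16/9) := by ring
    have h13 : a 13 ≤ 1/6 := by
      have := hgeo 13 le_rfl
      norm_num at this
      linarith
    have hβ36 : β₀ ≤ 1/36 := by
      have := hE 13 le_rfl
      linarith
    -- main invariant
    have key : ∀ k, (∀ j, j < k → 4*β₀ < vSeq j) → a (13 + k) ≤ 4*β₀ + vSeq k := by
      intro k
      induction k with
      | zero =>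
        intro _
        rw [vSeq_zero]
        linarith
      | succ k ih =>
        intro hyp
        have hvk := hyp k (Nat.lt_succ_self k)
        have hk := ih (fun j hj => hyp j (hj.trans (Nat.lt_succ_self k)))
        have hv0 : (0:ℝ) < vSeq k := vSeq_pos k
        have hv12 : vSeq k ≤ 1/2 := vSeq_le_half k
        have hA0 : 0 ≤ a (13+k) := ha (13+k)
        have hrec' : a (13+(k+1)) ≤ β₀ + a (13+k) * Real.sqrt (a (13+k)) / 2 := hrec (13+k)
        have hmono : a (13+k) * Real.sqrt (a (13+k)) ≤ (4*β₀ + vSeq k) * Real.sqrt (4*β₀ + vSeq k) :=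
          mul_le_mul hk (Real.sqrt_le_sqrt hk) (Real.sqrt_nonneg _) (by linarith)
        have h4 : Real.sqrt (4*β₀) = 2 * Real.sqrt β₀ := by
          rw [show (4:ℝ)*β₀ = 2^2*β₀ by ring, Real.sqrt_mul (by positivity), Real.sqrt_sq (by norm_num)]
        have hsplit : Real.sqrt (4*β₀ + vSeq k) ≤ 2*Real.sqrt β₀ + Real.sqrt (vSeq k) := by
          have := sqrt_add_le' (show (0:ℝ) ≤ 4*β₀ by linarith) hv0.le
          rw [h4] at this
          linarith
        have hsb0 := Real.sqrt_nonneg β₀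
        have hsv0 := Real.sqrt_nonneg (vSeq k)
        have hsb2 : Real.sqrt β₀ ^ 2 = β₀ := Real.sq_sqrt hβ.le
        have hsv2 : Real.sqrt (vSeq k) ^ 2 = vSeq k := Real.sq_sqrt hv0.le
        have hsb14 : Real.sqrt β₀ ≤ 1/4 := by nlinarith
        have hsv34 : Real.sqrt (vSeq k) ≤ 3/4 := by nlinarith
        have hsbv : Real.sqrt β₀ ≤ Real.sqrt (vSeq k) / 2 := by
          have h1 : Real.sqrt β₀ ≤ Real.sqrt (vSeq k / 4) := Real.sqrt_le_sqrt (by linarith)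
          have h2 : Real.sqrt (vSeq k / 4) = Real.sqrt (vSeq k) / 2 := by
            rw [show vSeq k / 4 = vSeq k * (1/2)^2 by ring, Real.sqrt_mul hv0.le,
              Real.sqrt_sq (by norm_num)]
            ring
          linarith
        have hmono2 : (4*β₀ + vSeq k) * Real.sqrt (4*β₀ + vSeq k)
            ≤ (4*β₀ + vSeq k) * (2*Real.sqrt β₀ + Real.sqrt (vSeq k)) :=
          mul_le_mul_of_nonneg_left hsplit (by linarith)
        rw [vSeq_succ]
        have hfin : β₀ + (4*β₀ + vSeq k) * (2*Real.sqrt β₀ + Real.sqrt (vSeq k)) / 2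
            ≤ 4*β₀ + vSeq k * Real.sqrt (vSeq k) := by
          nlinarith [mul_nonneg hβ.le (show (0:ℝ) ≤ 1/4 - Real.sqrt β₀ by linarith),
            mul_nonneg hβ.le (show (0:ℝ) ≤ 3/4 - Real.sqrt (vSeq k) by linarith),
            mul_nonneg hv0.le (show (0:ℝ) ≤ Real.sqrt (vSeq k)/2 - Real.sqrt β₀ by linarith)]
        linarith
    -- log facts
    set R := Real.log (1/β₀) with hRdef
    set L := Real.log R with hLdef
    have hinv : (36:ℝ) ≤ 1/β₀ := by
      rw [le_div_iff₀ hβ]; linarith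
    have hexp3 : Real.exp 3 ≤ 36 := by
      have h1 := Real.exp_one_lt_d9
      have h2 : Real.exp 3 = (Real.exp 1)^3 := by
        rw [← Real.exp_nat_mul]; norm_num
      have h4 : (Real.exp 1)^3 ≤ (2.7182818286:ℝ)^3 :=
        pow_le_pow_left₀ (Real.exp_pos 1).le h1.le 3
      rw [h2]
      calc (Real.exp 1)^3 ≤ (2.7182818286:ℝ)^3 := h4
        _ ≤ 36 := by norm_num
    have hR3 : 3 ≤ R := by
      rw [hRdef, Real.le_log_iff_exp_le (by positivity)]
      linarith
    have hL1 : 1 ≤ L := by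
      rw [hLdef, Real.le_log_iff_exp_le (by linarith)]
      have := Real.exp_one_lt_d9
      linarith
    have hlog2 : (1/2:ℝ) ≤ Real.log 2 := by
      rw [Real.le_log_iff_exp_le (by norm_num)]
      have h1 := Real.exp_one_lt_d9
      have h2 : Real.exp (1/2) * Real.exp (1/2) = Real.exp 1 := by
        rw [← Real.exp_add]; norm_num
      have := Real.exp_pos (1/2:ℝ)
      nlinarith
    have hlog32 : (1/3:ℝ) ≤ Real.log (3/2) := by
      rw [Real.le_log_iff_exp_le (by norm_num)]
      have h1 := Real.exp_one_lt_d9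
      have h2 : Real.exp (1/3) * Real.exp (1/3) * Real.exp (1/3) = Real.exp 1 := by
        rw [← Real.exp_add, ← Real.exp_add]; norm_num
      have := Real.exp_pos (1/3:ℝ)
      nlinarith
    set N' := ⌈6*L⌉₊ with hN'def
    have hN6L : 6*L ≤ (N' : ℝ) := Nat.le_ceil _
    have hpow : Real.exp (2*L) ≤ (3/2:ℝ)^(N' : ℕ) := by
      have he : (3/2:ℝ)^(N':ℕ) = Real.exp ((N':ℝ) * Real.log (3/2)) := by
        rw [Real.exp_nat_mul, Real.exp_log (by norm_num)]
      rw [he]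
      apply Real.exp_le_exp.2
      nlinarith
    have hexp2L : Real.exp (2*L) = R^2 := by
      rw [show 2*L = L + L by ring, Real.exp_add, hLdef, Real.exp_log (by linarith)]
      ring
    have hvN : vSeq N' ≤ 4*β₀ := by
      have hRpow : R ≤ Real.log 2 * (3/2:ℝ)^(N':ℕ) := by
        have hp2 : R^2 ≤ (3/2:ℝ)^(N':ℕ) := by rw [← hexp2L]; exact hpow
        nlinarith
      have hlogβ : Real.log β₀ = -R := by
        rw [hRdef, one_div, Real.log_inv, neg_neg]
      have hl4 : -R ≤ Real.log (4*β₀) := by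
        rw [← hlogβ]
        exact Real.log_le_log hβ (by linarith)
      calc vSeq N' = Real.exp (-(Real.log 2) * (3/2:ℝ)^(N':ℕ)) := rfl
        _ ≤ Real.exp (Real.log (4*β₀)) := Real.exp_le_exp.2 (by nlinarith)
        _ = 4*β₀ := Real.exp_log (by positivity)
    have hEx : ∃ k, vSeq k ≤ 4*β₀ := ⟨N', hvN⟩
    set n := Nat.find hEx with hndef
    have hn_le : n ≤ N' := Nat.find_min' hEx hvN
    have hPn : vSeq n ≤ 4*β₀ := Nat.find_spec hEx
    have hmin : ∀ j, j < n → 4*β₀ < vSeq j := by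
      intro j hj
      have := Nat.find_min hEx hj
      linarith [lt_of_not_ge this]
    have h8 : a (13+n) ≤ 8*β₀ := by
      have := key n hmin
      linarith
    have hT : a (14+n) ≤ 6*β₀ := by
      have e : 14 + n = (13+n) + 1 := by omega
      rw [e]
      have hrec' := hrec (13+n)
      have hA0 : 0 ≤ a (13+n) := ha (13+n)
      have hs8 : Real.sqrt (8*β₀) ≤ 1/2 := by
        have h1 : Real.sqrt (8*β₀) ^ 2 = 8*β₀ := Real.sq_sqrt (by positivity)
        have h2 := Real.sqrt_nonneg (8*β₀)
        nlinarith
      have hmono : a (13+n) * Real.sqrt (a (13+n)) ≤ (8*β₀) * Real.sqrt (8*β₀) :=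
        mul_le_mul h8 (Real.sqrt_le_sqrt h8) (Real.sqrt_nonneg _) (by positivity)
      nlinarith [Real.sqrt_nonneg (8*β₀)]
    refine ⟨14+n, ?_, hT⟩
    have hceil : (N' : ℝ) < 6*L + 1 := Nat.ceil_lt_add_one (by linarith)
    have hnn : (n:ℝ) ≤ (N':ℝ) := by exact_mod_cast hn_le
    have hmaxL : max 1 (Real.log (Real.log (1/β₀))) = L := max_eq_right hL1
    rw [hmaxL]
    push_cast
    nlinarith
end

section
/- Let (ã_t)_{t∈ℕ} be a sequence of real numbers with ã₀ ≥ 1 such that, for every t, if ã_t ≥ 1 then ã_{t+1} ≤ ã_t − (1/3) ã_t^{3/4}. Then for every t ∈ ℕ such that ã_s ≥ 1 for all s ≤ t, one has ã_t ≤ ((ã₀)^{1/4} − t/12)⁴. -/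
/-- Let `(ã_t)` be a real sequence with `ã₀ ≥ 1` such that whenever `ã_t ≥ 1` we have
`ã_{t+1} ≤ ã_t − (1/3) ã_t^{3/4}`. Then for every `t` such that `ã_s ≥ 1` for all `s ≤ t`,
we have `ã_t ≤ (ã₀^{1/4} − t/12)⁴`. -/
theorem seq_quartic_decrease (a : ℕ → ℝ) (h0 : 1 ≤ a 0)
    (hrec : ∀ t, 1 ≤ a t → a (t + 1) ≤ a t - (1 / 3) * a t ^ ((3 : ℝ) / 4)) :
    ∀ t : ℕ, (∀ s ≤ t, 1 ≤ a s) →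
      a t ≤ (a 0 ^ ((1 : ℝ) / 4) - (t : ℝ) / 12) ^ 4 := by
  have aux : ∀ t : ℕ, (∀ s ≤ t, 1 ≤ a s) →
      a t ^ ((1 : ℝ) / 4) ≤ a 0 ^ ((1 : ℝ) / 4) - (t : ℝ) / 12 := by
    intro t
    induction t with
    | zero => intro _; simp
    | succ t ih =>
      intro h
      have ht : 1 ≤ a t := h t (Nat.le_succ t)
      have hat : (0:ℝ) ≤ a t := le_trans zero_le_one ht
      have ih' := ih (fun s hs => h s (hs.trans (Nat.le_succ t)))
      set d := a t ^ ((1:ℝ)/4) with hd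
      have hd1 : 1 ≤ d := Real.one_le_rpow ht (by norm_num)
      have hd0 : (0:ℝ) ≤ d := le_trans zero_le_one hd1
      have heq4 : a t = d ^ 4 := by
        rw [hd, ← Real.rpow_natCast (a t ^ ((1:ℝ)/4)) 4, ← Real.rpow_mul hat]
        norm_num
      have heq3 : a t ^ ((3:ℝ)/4) = d ^ 3 := by
        rw [hd, ← Real.rpow_natCast (a t ^ ((1:ℝ)/4)) 3, ← Real.rpow_mul hat]
        norm_num
      have hrec' := hrec t ht
      have hstep : a (t+1) ≤ (d - 1/12) ^ 4 := by
        rw [heq3] at hrec'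
        nlinarith [sq_nonneg d, sq_nonneg (d - 1/12), hrec', heq4]
      have hbase : (0:ℝ) ≤ d - 1/12 := by linarith
      have hat1 : (0:ℝ) ≤ a (t+1) := le_trans zero_le_one (h (t+1) le_rfl)
      have := Real.rpow_le_rpow hat1 hstep (by norm_num : (0:ℝ) ≤ (1:ℝ)/4)
      have hpow : ((d - 1/12) ^ 4) ^ ((1:ℝ)/4) = d - 1/12 := by
        rw [← Real.rpow_natCast (d - 1/12) 4, ← Real.rpow_mul hbase]
        norm_num
      rw [hpow] at this
      push_cast
      linarith
  intro t h
  have h1 := aux t h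
  have ht : 1 ≤ a t := h t le_rfl
  have hat : (0:ℝ) ≤ a t := le_trans zero_le_one ht
  have hd0 : (0:ℝ) ≤ a t ^ ((1:ℝ)/4) := Real.rpow_nonneg hat _
  have heq : a t = (a t ^ ((1:ℝ)/4)) ^ 4 := by
    rw [← Real.rpow_natCast (a t ^ ((1:ℝ)/4)) 4, ← Real.rpow_mul hat]
    norm_num
  calc a t = (a t ^ ((1:ℝ)/4)) ^ 4 := heq
    _ ≤ (a 0 ^ ((1:ℝ)/4) - (t:ℝ)/12) ^ 4 := pow_le_pow_left₀ hd0 h1 4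
end

section
/- For every α ∈ ℝ with α ≠ 0 and every β ∈ ℝ, one has log(1 + exp(β)) ≤ log(1 + exp(α)) + (β − α)/(1 + exp(−α)) + ((exp(α) − 1)/(4α(exp(α) + 1))) · (β − α)². -/
open Real

private lemma sinh_cosh_ratio_anti {s t : ℝ} (hs : 0 < s) (hst : s ≤ t) :
    Real.sinh t / (t * Real.cosh t) ≤ Real.sinh s / (s * Real.cosh s) := by
  have hderiv : ∀ x : ℝ, 0 < x →
      HasDerivAt (fun y => Real.sinh y / (y * Real.cosh y))
        ((Real.cosh x * (x * Real.cosh x) - Real.sinh x * (1 * Real.cosh x + x * Real.sinh x))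
          / (x * Real.cosh x) ^ 2) x := by
    intro x hx
    exact (Real.hasDerivAt_sinh x).div ((hasDerivAt_id x).mul (Real.hasDerivAt_cosh x))
      (by positivity)
  have key : AntitoneOn (fun y => Real.sinh y / (y * Real.cosh y)) (Set.Icc s t) := by
    apply antitoneOn_of_deriv_nonpos (convex_Icc s t)
    · apply ContinuousOn.div (Real.continuous_sinh.continuousOn)
        ((continuous_id.mul Real.continuous_cosh).continuousOn)
      intro x hx
      have hx0 : 0 < x := lt_of_lt_of_le hs hx.1
      exact mul_ne_zero hx0.ne' (Real.cosh_pos x).ne'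
    · intro x hx
      rw [interior_Icc] at hx
      exact (hderiv x (hs.trans hx.1)).differentiableAt.differentiableWithinAt
    · intro x hx
      rw [interior_Icc] at hx
      have hx0 : 0 < x := hs.trans hx.1
      rw [(hderiv x hx0).deriv]
      apply div_nonpos_of_nonpos_of_nonneg _ (by positivity)
      have h1 : 2 * x ≤ Real.sinh (2 * x) := Real.self_le_sinh_iff.2 (by positivity)
      have h2 : Real.sinh (2 * x) = 2 * Real.sinh x * Real.cosh x := by
        rw [two_mul, Real.sinh_add]; ring
      have h3 : Real.cosh x ^ 2 - Real.sinh x ^ 2 = 1 := Real.cosh_sq_sub_sinh_sq x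
      nlinarith [h1, h2, h3]
  exact key (Set.left_mem_Icc.2 hst) (Set.right_mem_Icc.2 hst) hst

private lemma key_cosh_ineq {a b : ℝ} (ha : 0 < a) (hb : 0 ≤ b) :
    Real.log (Real.cosh (b / 2)) ≤ Real.log (Real.cosh (a / 2)) +
      Real.sinh (a / 2) / (4 * a * Real.cosh (a / 2)) * (b ^ 2 - a ^ 2) := by
  set μ := Real.sinh (a / 2) / (4 * a * Real.cosh (a / 2)) with hμ
  set F : ℝ → ℝ := fun y => μ * y ^ 2 - Real.log (Real.cosh (y / 2)) with hF
  have hderiv : ∀ x : ℝ, HasDerivAt F (μ * (2 * x) - Real.sinh (x / 2) * (1 / 2) / Real.cosh (x / 2)) x := by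
    intro x
    have h1 : HasDerivAt (fun y : ℝ => μ * y ^ 2) (μ * (2 * x)) x := by
      simpa using ((hasDerivAt_pow 2 x).const_mul μ)
    have h2 : HasDerivAt (fun y : ℝ => Real.cosh (y / 2)) (Real.sinh (x / 2) * (1 / 2)) x := by
      have := (Real.hasDerivAt_cosh (x / 2)).comp x ((hasDerivAt_id x).div_const 2)
      simpa [Function.comp_def] using this
    have h3 : HasDerivAt (fun y : ℝ => Real.log (Real.cosh (y / 2)))
        (Real.sinh (x / 2) * (1 / 2) / Real.cosh (x / 2)) x :=
      h2.log (by positivity)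
    exact h1.sub h3
  -- cross-multiplied ratio inequality
  have ratio : ∀ x : ℝ, 0 < x →
      (a ≤ x → Real.sinh (x / 2) * (a / 2 * Real.cosh (a / 2)) ≤
        Real.sinh (a / 2) * (x / 2 * Real.cosh (x / 2))) := by
    intro x hx hax
    have := sinh_cosh_ratio_anti (s := a / 2) (t := x / 2) (by positivity) (by linarith)
    rw [div_le_div_iff₀ (by positivity) (by positivity)] at this
    linarith
  have ratio' : ∀ x : ℝ, 0 < x →
      (x ≤ a → Real.sinh (a / 2) * (x / 2 * Real.cosh (x / 2)) ≤
        Real.sinh (x / 2) * (a / 2 * Real.cosh (a / 2))) := by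
    intro x hx hax
    have := sinh_cosh_ratio_anti (s := x / 2) (t := a / 2) (by positivity) (by linarith)
    rw [div_le_div_iff₀ (by positivity) (by positivity)] at this
    linarith
  have main : F a ≤ F b := by
    rcases le_total a b with hab | hab
    · have mono : MonotoneOn F (Set.Icc a b) := by
        apply monotoneOn_of_deriv_nonneg (convex_Icc a b)
        · exact fun x _ => ((hderiv x).continuousAt).continuousWithinAt
        · intro x hx
          exact (hderiv x).differentiableAt.differentiableWithinAt
        · intro x hx
          rw [interior_Icc] at hx
          have hx0 : 0 < x := ha.trans hx.1
          rw [(hderiv x).deriv, sub_nonneg, hμ, div_mul_eq_mul_div,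
            div_le_div_iff₀ (Real.cosh_pos _) (by positivity)]
          have := ratio x hx0 hx.1.le
          nlinarith [Real.cosh_pos (a / 2), Real.cosh_pos (x / 2)]
      exact mono (Set.left_mem_Icc.2 hab) (Set.right_mem_Icc.2 hab) hab
    · have anti : AntitoneOn F (Set.Icc b a) := by
        apply antitoneOn_of_deriv_nonpos (convex_Icc b a)
        · exact fun x _ => ((hderiv x).continuousAt).continuousWithinAt
        · intro x hx
          exact (hderiv x).differentiableAt.differentiableWithinAt
        · intro x hx
          rw [interior_Icc] at hx
          have hx0 : 0 < x := lt_of_le_of_lt hb hx.1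
          rw [(hderiv x).deriv, sub_nonpos, hμ]
          have := ratio' x hx0 hx.2.le
          rw [div_mul_eq_mul_div, div_le_div_iff₀ (by positivity) (Real.cosh_pos _)]
          nlinarith [Real.cosh_pos (a / 2), Real.cosh_pos (x / 2)]
      exact anti (Set.left_mem_Icc.2 hab) (Set.right_mem_Icc.2 hab) hab
  have : μ * a ^ 2 - Real.log (Real.cosh (a / 2)) ≤ μ * b ^ 2 - Real.log (Real.cosh (b / 2)) := main
  linarith [this]

/-- For every `α ≠ 0` and every `β`,
`log(1 + e^β) ≤ log(1 + e^α) + (β − α)/(1 + e^{−α}) + ((e^α − 1)/(4α(e^α + 1)))(β − α)²`. -/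
theorem log_one_add_exp_quadratic_ub (α β : ℝ) (hα : α ≠ 0) :
    Real.log (1 + Real.exp β) ≤
      Real.log (1 + Real.exp α) + (β - α) / (1 + Real.exp (-α))
        + (Real.exp α - 1) / (4 * α * (Real.exp α + 1)) * (β - α) ^ 2 := by
  have ha : 0 < |α| := abs_pos.2 hα
  have key := key_cosh_ineq ha (abs_nonneg β)
  have eb : |β| / 2 = |β / 2| := by rw [abs_div, abs_two]
  have ea : |α| / 2 = |α / 2| := by rw [abs_div, abs_two]
  have eμ : Real.sinh (|α| / 2) / (4 * |α| * Real.cosh (|α| / 2))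
      = Real.sinh (α / 2) / (4 * α * Real.cosh (α / 2)) := by
    rcases le_or_gt 0 α with h | h
    · rw [abs_of_nonneg h]
    · rw [abs_of_neg h]
      rw [show -α / 2 = -(α / 2) by ring, Real.sinh_neg, Real.cosh_neg]
      ring
  rw [eμ, eb, Real.cosh_abs, ea, Real.cosh_abs, sq_abs, sq_abs] at key
  have hlog : ∀ x : ℝ, Real.log (1 + Real.exp x)
      = x / 2 + Real.log 2 + Real.log (Real.cosh (x / 2)) := by
    intro x
    have hE : Real.exp x = Real.exp (x / 2) * Real.exp (x / 2) := by
      rw [← Real.exp_add]; ring_nf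
    have h : 1 + Real.exp x = Real.exp (x / 2) * (2 * Real.cosh (x / 2)) := by
      rw [Real.cosh_eq, hE, Real.exp_neg]
      have := (Real.exp_pos (x / 2)).ne'
      field_simp
      ring
    rw [h, Real.log_mul (Real.exp_ne_zero _) (by positivity), Real.log_exp,
      Real.log_mul two_ne_zero (Real.cosh_pos _).ne']
    ring
  rw [hlog β, hlog α]
  have heq : α / 2 + (β - α) / (1 + Real.exp (-α))
      + (Real.exp α - 1) / (4 * α * (Real.exp α + 1)) * (β - α) ^ 2
      = β / 2 + Real.sinh (α / 2) / (4 * α * Real.cosh (α / 2)) * (β ^ 2 - α ^ 2) := by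
    set E := Real.exp (α / 2) with hEdef
    have hEpos : 0 < E := Real.exp_pos _
    have h1 : Real.exp α = E * E := by rw [hEdef, ← Real.exp_add]; ring_nf
    have h2 : Real.exp (-α) = (E * E)⁻¹ := by rw [Real.exp_neg, h1]
    have hsinh : Real.sinh (α / 2) = (E - E⁻¹) / 2 := by
      rw [Real.sinh_eq, Real.exp_neg]
    have hcosh : Real.cosh (α / 2) = (E + E⁻¹) / 2 := by
      rw [Real.cosh_eq, Real.exp_neg]
    have hE0 : E ≠ 0 := hEpos.ne'
    have d1 : (1 : ℝ) + (E * E)⁻¹ ≠ 0 := by positivity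
    have d2 : E * E + 1 ≠ 0 := by positivity
    have d3 : E + E⁻¹ ≠ 0 := by positivity
    rw [h1, h2, hsinh, hcosh]
    field_simp
    ring
  linarith [key]
end

section
/- For every 0 < μ < 1 and every λ ∈ ℝ with λ ≠ 0, one has (2/λ²)·(log(μ·exp(λ) + 1 − μ) − μλ) ≤ (1/2 − μ)/log(1/μ − 1), where for μ = 1/2 the right-hand side is interpreted as its limiting value 1/4. -/
open Real

lemma hasDerivAt_tanh' (x : ℝ) : HasDerivAt Real.tanh (1 / Real.cosh x ^ 2) x := by
  have h : HasDerivAt (fun y => Real.sinh y / Real.cosh y)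
      ((Real.cosh x * Real.cosh x - Real.sinh x * Real.sinh x) / Real.cosh x ^ 2) x :=
    (Real.hasDerivAt_sinh x).div (Real.hasDerivAt_cosh x) (Real.cosh_pos x).ne'
  have e : (Real.cosh x * Real.cosh x - Real.sinh x * Real.sinh x) = 1 := by
    have := Real.cosh_sq_sub_sinh_sq x; nlinarith
  rw [e] at h
  exact h.congr_of_eventuallyEq (by filter_upwards with y using Real.tanh_eq_sinh_div_cosh y)

lemma continuous_tanh' : Continuous Real.tanh :=
  (Differentiable.continuous fun x => (hasDerivAt_tanh' x).differentiableAt)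

lemma tanh_le_self' {x : ℝ} (hx : 0 ≤ x) : Real.tanh x ≤ x := by
  have mono : MonotoneOn (fun t => t - Real.tanh t) (Set.Ici (0:ℝ)) := by
    apply monotoneOn_of_deriv_nonneg (convex_Ici 0)
    · exact (continuous_id.sub continuous_tanh').continuousOn
    · intro t ht
      have h : HasDerivAt (fun y => y - Real.tanh y) (1 - 1 / Real.cosh t ^ 2) t :=
        (hasDerivAt_id t).sub (hasDerivAt_tanh' t)
      exact h.differentiableAt.differentiableWithinAt
    · intro t ht
      have h : HasDerivAt (fun y => y - Real.tanh y) (1 - 1 / Real.cosh t ^ 2) t :=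
        (hasDerivAt_id t).sub (hasDerivAt_tanh' t)
      rw [h.deriv]
      have h1 := Real.one_le_cosh t
      have h2 : (1:ℝ) ≤ Real.cosh t ^ 2 := by nlinarith
      have : 1 / Real.cosh t ^ 2 ≤ 1 := by
        rw [div_le_one (by nlinarith)]; exact h2
      linarith
  have := mono (Set.self_mem_Ici) (Set.mem_Ici.2 hx) hx
  simpa [Real.tanh_zero] using this

lemma cross_tanh {a b : ℝ} (ha : 0 ≤ a) (hab : a ≤ b) : a * Real.tanh b ≤ b * Real.tanh a := by
  rcases eq_or_lt_of_le ha with h0 | h0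
  · simp [← h0, Real.tanh_zero]
  · have anti : AntitoneOn (fun t => Real.tanh t / t) (Set.Ioi (0:ℝ)) := by
      apply antitoneOn_of_deriv_nonpos (convex_Ioi 0)
      · exact ContinuousOn.div continuous_tanh'.continuousOn continuousOn_id
          (fun t ht => ne_of_gt ht)
      · intro t ht
        rw [interior_Ioi] at ht
        have h : HasDerivAt (fun y => Real.tanh y / y)
            ((1 / Real.cosh t ^ 2 * t - Real.tanh t * 1) / t ^ 2) t :=
          (hasDerivAt_tanh' t).div (hasDerivAt_id t) (ne_of_gt ht)
        exact h.differentiableAt.differentiableWithinAt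
      · intro t ht
        rw [interior_Ioi] at ht
        have ht' : (0:ℝ) < t := ht
        have h : HasDerivAt (fun y => Real.tanh y / y)
            ((1 / Real.cosh t ^ 2 * t - Real.tanh t * 1) / t ^ 2) t :=
          (hasDerivAt_tanh' t).div (hasDerivAt_id t) (ne_of_gt ht')
        rw [h.deriv]
        have hc := Real.cosh_pos t
        have hs : t ≤ Real.sinh t * Real.cosh t := by
          have h1 : t ≤ Real.sinh t := (Real.self_lt_sinh_iff.2 ht').le
          nlinarith [Real.one_le_cosh t, Real.sinh_nonneg_iff.2 ht'.le]
        have key : 1 / Real.cosh t ^ 2 * t - Real.tanh t * 1 ≤ 0 := by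
          rw [Real.tanh_eq_sinh_div_cosh, mul_one, sub_nonpos, div_mul_eq_mul_div,
            div_le_div_iff₀ (by positivity) hc]
          nlinarith
        exact div_nonpos_of_nonpos_of_nonneg key (by positivity)
    have := anti (Set.mem_Ioi.2 h0) (Set.mem_Ioi.2 (lt_of_lt_of_le h0 hab)) hab
    rw [div_le_div_iff₀ (lt_of_lt_of_le h0 hab) h0] at this
    linarith

lemma hasDerivAt_logcosh_sub (c t : ℝ) :
    HasDerivAt (fun y => Real.log (Real.cosh y) - y^2 * c) (Real.tanh t - 2*t*c) t := by
  have h1 : HasDerivAt (fun y => Real.log (Real.cosh y)) (Real.sinh t / Real.cosh t) t :=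
    (Real.hasDerivAt_cosh t).log (Real.cosh_pos t).ne'
  have h2 : HasDerivAt (fun y : ℝ => y^2 * c) ((2*t)*c) t := by
    have := (hasDerivAt_pow 2 t).mul_const c
    simpa using this
  have := h1.sub h2
  rw [Real.tanh_eq_sinh_div_cosh]
  exact this

lemma key_pos {s : ℝ} (hs : 0 < s) {u : ℝ} (hu : 0 ≤ u) :
    Real.log (Real.cosh u) ≤ Real.log (Real.cosh s) + (u^2 - s^2) * (Real.tanh s / (2*s)) := by
  set c := Real.tanh s / (2*s) with hc
  set f := fun t => Real.log (Real.cosh t) - t^2 * c with hf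
  have hfc : Continuous f :=
    ((Real.continuous_cosh.log (fun x => (Real.cosh_pos x).ne')).sub
      (continuous_pow 2 |>.mul continuous_const))
  have main : f u ≤ f s := by
    rcases le_total u s with h | h
    · have mono : MonotoneOn f (Set.Icc 0 s) := by
        apply monotoneOn_of_deriv_nonneg (convex_Icc 0 s) hfc.continuousOn
        · intro t ht
          exact (hasDerivAt_logcosh_sub c t).differentiableAt.differentiableWithinAt
        · intro t ht
          rw [interior_Icc] at ht
          rw [(hasDerivAt_logcosh_sub c t).deriv]
          have hcr := cross_tanh ht.1.le ht.2.le
          have : 2*t*c = t * Real.tanh s / s := by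
            rw [hc]; first | (field_simp; ring) | field_simp
          rw [this, sub_nonneg, div_le_iff₀ hs]
          linarith
      exact mono (Set.mem_Icc.2 ⟨hu, h⟩) (Set.mem_Icc.2 ⟨hs.le, le_refl s⟩) h
    · have anti : AntitoneOn f (Set.Ici s) := by
        apply antitoneOn_of_deriv_nonpos (convex_Ici s) hfc.continuousOn
        · intro t ht
          exact (hasDerivAt_logcosh_sub c t).differentiableAt.differentiableWithinAt
        · intro t ht
          rw [interior_Ici] at ht
          have hts : s < t := ht
          have hcr := cross_tanh hs.le hts.le
          rw [(hasDerivAt_logcosh_sub c t).deriv]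
          have : 2*t*c = t * Real.tanh s / s := by
            rw [hc]; first | (field_simp; ring) | field_simp
          rw [this, sub_nonpos, le_div_iff₀ hs]
          linarith
      exact anti (Set.mem_Ici.2 (le_refl s)) (Set.mem_Ici.2 h) h
  have : Real.log (Real.cosh u) - u^2 * c ≤ Real.log (Real.cosh s) - s^2 * c := main
  linarith

lemma key_gen {s : ℝ} (hs : s ≠ 0) (u : ℝ) :
    Real.log (Real.cosh u) ≤ Real.log (Real.cosh s) + (u^2 - s^2) * (Real.tanh s / (2*s)) := by
  have hratio : Real.tanh |s| / (2*|s|) = Real.tanh s / (2*s) := by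
    rcases abs_cases s with ⟨h, _⟩ | ⟨h, _⟩
    · rw [h]
    · rw [h, Real.tanh_neg]; ring
  have := key_pos (abs_pos.2 hs) (abs_nonneg u) (s := |s|) (u := |u|)
  rwa [Real.cosh_abs, Real.cosh_abs, sq_abs, sq_abs, hratio] at this

lemma logcosh_le_half_sq (u : ℝ) : Real.log (Real.cosh u) ≤ u^2/2 := by
  have mono : MonotoneOn (fun t => t^2/2 - Real.log (Real.cosh t)) (Set.Ici (0:ℝ)) := by
    apply monotoneOn_of_deriv_nonneg (convex_Ici 0)
    · exact ((continuous_pow 2 |>.div_const 2).sub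
        (Real.continuous_cosh.log (fun x => (Real.cosh_pos x).ne'))).continuousOn
    · intro t ht
      have h : HasDerivAt (fun y => y^2/2 - Real.log (Real.cosh y)) (t - Real.tanh t) t := by
        have heq : t - Real.tanh t = -(Real.tanh t - 2*t*(1/2)) := by ring
        rw [heq]
        exact (hasDerivAt_logcosh_sub (1/2) t).neg.congr_of_eventuallyEq
          (by filter_upwards with y; simp only [Pi.neg_apply]; ring)
      exact h.differentiableAt.differentiableWithinAt
    · intro t ht
      rw [interior_Ici] at ht
      have ht' : (0:ℝ) < t := ht
      have h : HasDerivAt (fun y => y^2/2 - Real.log (Real.cosh y)) (t - Real.tanh t) t := by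
        have heq : t - Real.tanh t = -(Real.tanh t - 2*t*(1/2)) := by ring
        rw [heq]
        exact (hasDerivAt_logcosh_sub (1/2) t).neg.congr_of_eventuallyEq
          (by filter_upwards with y; simp only [Pi.neg_apply]; ring)
      rw [h.deriv, sub_nonneg]
      exact tanh_le_self' ht'.le
  have h0 := mono (Set.self_mem_Ici) (Set.mem_Ici.2 (abs_nonneg u)) (abs_nonneg u)
  simp only [Real.cosh_zero, Real.log_one] at h0
  have : (0:ℝ) ≤ |u|^2/2 - Real.log (Real.cosh |u|) := by simpa using h0
  rw [Real.cosh_abs, sq_abs] at this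
  linarith

/-- For every `0 < μ < 1` and every `λ ≠ 0`,
`(2/λ²)(log(μ e^λ + 1 − μ) − μλ) ≤ (1/2 − μ)/log(1/μ − 1)`, where the right-hand side is
interpreted as its limiting value `1/4` when `μ = 1/2`. -/
theorem arbel_strict_bound (μ lam : ℝ) (hμ0 : 0 < μ) (hμ1 : μ < 1) (hlam : lam ≠ 0) :
    (2 / lam ^ 2) * (Real.log (μ * Real.exp lam + 1 - μ) - μ * lam)
      ≤ if μ = 1 / 2 then 1 / 4 else (1 / 2 - μ) / Real.log (1 / μ - 1) := by
  have hlam2 : (0:ℝ) < lam^2 := by positivity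
  have hpos : 0 < 1/μ - 1 := by
    have : 1 < 1/μ := one_lt_one_div hμ0 hμ1
    linarith
  set b := Real.log (1/μ - 1) with hbdef
  have hE : Real.exp b = 1/μ - 1 := Real.exp_log hpos
  set s := b/2 with hsdef
  set u := lam/2 - s with hudef
  set A := Real.exp (lam/2) with hAdef
  set B := Real.exp s with hBdef
  have hA : Real.exp lam = A * A := by rw [hAdef, ← Real.exp_add]; ring_nf
  have hB : Real.exp b = B * B := by rw [hBdef, ← Real.exp_add]; rw [hsdef]; ring_nf
  have hA0 : A ≠ 0 := Real.exp_ne_zero _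
  have hB0 : B ≠ 0 := Real.exp_ne_zero _
  have hμB : μ * (B*B) = 1 - μ := by
    rw [← hB, hE]; field_simp
  have hcosh_s : Real.cosh s = (B + B⁻¹)/2 := by
    rw [Real.cosh_eq, ← hBdef, Real.exp_neg, ← hBdef]
  have hcosh_u : Real.cosh u = (A/B + B/A)/2 := by
    rw [Real.cosh_eq, hudef, neg_sub, Real.exp_sub, Real.exp_sub, ← hAdef, ← hBdef]
  have hBB1 : B*B + 1 ≠ 0 := by positivity
  have hμeq : μ = 1/(B*B+1) := by
    rw [eq_div_iff hBB1]; linarith [hμB]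
  have hid : μ * Real.exp lam + 1 - μ = A * Real.cosh u / Real.cosh s := by
    rw [hcosh_u, hcosh_s, hA, hμeq]
    have hBB : B + B⁻¹ ≠ 0 := by positivity
    field_simp
    ring
  have htanh : Real.tanh s = 1 - 2*μ := by
    rw [Real.tanh_eq_sinh_div_cosh, Real.sinh_eq, Real.cosh_eq, ← hBdef, Real.exp_neg, ← hBdef]
    rw [hμeq, div_eq_iff (by positivity : ((B + B⁻¹)/2 : ℝ) ≠ 0)]
    field_simp
    ring
  have hcoshu0 : Real.cosh u ≠ 0 := (Real.cosh_pos u).ne'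
  have hcoshs0 : Real.cosh s ≠ 0 := (Real.cosh_pos s).ne'
  have hlog : Real.log (μ * Real.exp lam + 1 - μ)
      = lam/2 + Real.log (Real.cosh u) - Real.log (Real.cosh s) := by
    rw [hid, Real.log_div (mul_ne_zero hA0 hcoshu0) hcoshs0, Real.log_mul hA0 hcoshu0,
      hAdef, Real.log_exp]
  by_cases hμ : μ = 1/2
  · rw [if_pos hμ]
    -- here b = 0, s = 0, u = lam/2
    have hb0 : b = 0 := by
      rw [hbdef, hμ]; norm_num
    have hs0 : s = 0 := by rw [hsdef, hb0]; norm_num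
    have hkey := logcosh_le_half_sq u
    have hψ : Real.log (μ * Real.exp lam + 1 - μ) - μ * lam ≤ lam^2/2 * (1/4) := by
      rw [hlog, hμ]
      have hu' : u = lam/2 := by rw [hudef, hs0]; ring
      rw [hs0, Real.cosh_zero, Real.log_one, hu'] at *
      have := logcosh_le_half_sq (lam/2)
      nlinarith
    have h1 := mul_le_mul_of_nonneg_left hψ (le_of_lt (by positivity : (0:ℝ) < 2/lam^2))
    have h2 : (2/lam^2) * (lam^2/2 * (1/4)) = 1/4 := by field_simp
    linarith
  · rw [if_neg hμ]
    have hb0 : b ≠ 0 := by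
      intro h
      rw [h, Real.exp_zero] at hE
      apply hμ
      field_simp at hE
      linarith
    have hs : s ≠ 0 := by
      rw [hsdef]; exact div_ne_zero hb0 two_ne_zero
    have hkey := key_gen hs u
    have hψ : Real.log (μ * Real.exp lam + 1 - μ) - μ * lam ≤ lam^2/2 * ((1/2 - μ)/b) := by
      rw [hlog]
      have halg : lam/2 + (Real.log (Real.cosh s) + (u^2 - s^2) * (Real.tanh s / (2*s)))
          - Real.log (Real.cosh s) - μ * lam = lam^2/2 * ((1/2 - μ)/b) := by
        rw [htanh, hudef, hsdef]
        field_simp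
        ring
      linarith
    have h1 := mul_le_mul_of_nonneg_left hψ (le_of_lt (by positivity : (0:ℝ) < 2/lam^2))
    have h2 : (2/lam^2) * (lam^2/2 * ((1/2 - μ)/b)) = (1/2 - μ)/b := by
      field_simp
    linarith
end

section
/- Let λ₀ ≥ 0 and let A ∈ ℝ^{d×d} be symmetric. Then Ψ_{λ₀}(A, clip) is a minimizer of ‖Â − A‖_F over all symmetric matrices Â ∈ ℝ^{d×d} satisfying xᵀ Â x ≥ λ₀‖x‖² for all x ∈ ℝ^d; that is, for every symmetric Â with Â ⪰ λ₀ I_d one has ‖Ψ_{λ₀}(A, clip) − A‖_F ≤ ‖Â − A‖_F. -/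
open Matrix

lemma trace_transpose_mul_eq_sum_sq {d : ℕ} (M : Matrix (Fin d) (Fin d) ℝ) :
    Matrix.trace (Mᵀ * M) = ∑ i, ∑ j, (M j i)^2 := by
  simp [Matrix.trace, Matrix.mul_apply, Matrix.diag, sq]

lemma conjTranspose_eq_transpose_real {d : ℕ} (M : Matrix (Fin d) (Fin d) ℝ) : Mᴴ = Mᵀ := by
  ext i j; simp [Matrix.conjTranspose_apply]

lemma trace_conj_invariant {d : ℕ} (U N : Matrix (Fin d) (Fin d) ℝ)
    (hU : U ∈ Matrix.unitaryGroup (Fin d) ℝ) :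
    Matrix.trace ((star U * N * U)ᵀ * (star U * N * U)) = Matrix.trace (Nᵀ * N) := by
  have h1 : U * star U = 1 := (Matrix.mem_unitaryGroup_iff).mp hU
  rw [← conjTranspose_eq_transpose_real, ← conjTranspose_eq_transpose_real N,
    ← Matrix.star_eq_conjTranspose, ← Matrix.star_eq_conjTranspose]
  simp only [StarMul.star_mul, star_star]
  have e : star U * (star N * U) * (star U * N * U) = star U * (star N * N) * U := by
    simp only [mul_assoc]
    rw [← mul_assoc U (star U) (N * U), h1, one_mul]
  rw [e, Matrix.trace_mul_cycle, ← Matrix.mul_assoc, h1, Matrix.one_mul]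

/-- The Euclidean norm on `ℝ^d`. -/
noncomputable def enorm' {d : ℕ} (x : Fin d → ℝ) : ℝ := Real.sqrt (x ⬝ᵥ x)

/-- The Frobenius norm `‖M‖_F = √(trace(MᵀM))`. -/
noncomputable def frobNorm' {d : ℕ} (M : Matrix (Fin d) (Fin d) ℝ) : ℝ :=
  Real.sqrt (Matrix.trace (Mᵀ * M))

/-- The eigenvalue clipping operator `Ψ_{λ₀}(A, clip) = Σ_i max{λ₀, λ_i} u_i u_iᵀ`,
given by applying `t ↦ max{λ₀, t}` to `A` via the (continuous) functional calculus. -/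
noncomputable def psiClip {d : ℕ} (lam0 : ℝ) (A : Matrix (Fin d) (Fin d) ℝ) :
    Matrix (Fin d) (Fin d) ℝ :=
  cfc (fun t : ℝ => max lam0 t) A

/-- For `λ₀ ≥ 0` and symmetric `A`, `Ψ_{λ₀}(A, clip)` minimizes `‖Â − A‖_F` over all
symmetric `Â` with `Â ⪰ λ₀ I_d`: for every such `Â`,
`‖Ψ_{λ₀}(A, clip) − A‖_F ≤ ‖Â − A‖_F`. -/
theorem psiClip_is_frobenius_projection {d : ℕ} (lam0 : ℝ) (hlam0 : 0 ≤ lam0)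
    (A : Matrix (Fin d) (Fin d) ℝ) (hAsym : Aᵀ = A) :
    ∀ B : Matrix (Fin d) (Fin d) ℝ, Bᵀ = B →
      (∀ x : Fin d → ℝ, lam0 * enorm' x ^ 2 ≤ x ⬝ᵥ B.mulVec x) →
      frobNorm' (psiClip lam0 A - A) ≤ frobNorm' (B - A) := by
  intro B hBsym hB
  have hA : A.IsHermitian := by
    show Aᴴ = A
    rw [conjTranspose_eq_transpose_real]; exact hAsym
  set U : Matrix (Fin d) (Fin d) ℝ := (hA.eigenvectorUnitary : Matrix (Fin d) (Fin d) ℝ) with hUdef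
  have hU : U ∈ Matrix.unitaryGroup (Fin d) ℝ := (hA.eigenvectorUnitary).2
  have h1 : U * star U = 1 := (Matrix.mem_unitaryGroup_iff).mp hU
  have h2 : star U * U = 1 := (Matrix.mem_unitaryGroup_iff').mp hU
  set μ : Fin d → ℝ := hA.eigenvalues with hμdef
  have hAdiag : star U * A * U = Matrix.diagonal μ := by
    have := hA.conjStarAlgAut_star_eigenvectorUnitary
    rw [Unitary.conjStarAlgAut_apply, Unitary.coe_star, star_star] at this
    exact this
  -- psiClip diagonalizes
  have hpsi : psiClip lam0 A = U * Matrix.diagonal (fun i => max lam0 (μ i)) * star U := by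
    rw [psiClip, hA.cfc_eq, Matrix.IsHermitian.cfc]; rfl
  have hPsiDiag : star U * (psiClip lam0 A - A) * U
      = Matrix.diagonal (fun i => max lam0 (μ i) - μ i) := by
    rw [Matrix.mul_sub, Matrix.sub_mul, hAdiag, hpsi]
    have : star U * (U * Matrix.diagonal (fun i => max lam0 (μ i)) * star U) * U
        = Matrix.diagonal (fun i => max lam0 (μ i)) := by
      simp only [mul_assoc]
      rw [← mul_assoc (star U) U, h2, one_mul, mul_one]
    rw [this, ← Matrix.diagonal_sub]
  -- Frobenius norm squared of psi - A
  have hS1 : Matrix.trace ((psiClip lam0 A - A)ᵀ * (psiClip lam0 A - A))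
      = ∑ i, (max lam0 (μ i) - μ i)^2 := by
    rw [← trace_conj_invariant U _ hU, hPsiDiag, Matrix.diagonal_transpose,
      Matrix.diagonal_mul_diagonal, Matrix.trace_diagonal]
    simp [sq]
  set C : Matrix (Fin d) (Fin d) ℝ := star U * (B - A) * U with hCdef
  have hS2 : Matrix.trace ((B - A)ᵀ * (B - A)) = ∑ i, ∑ j, (C j i)^2 := by
    rw [← trace_conj_invariant U _ hU, trace_transpose_mul_eq_sum_sq]
  -- diagonal entries of star U * B * U are ≥ lam0
  have hdiagB : ∀ i, lam0 ≤ (star U * B * U) i i := by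
    intro i
    set x : Fin d → ℝ := fun k => U k i with hxdef
    have hxx : x ⬝ᵥ x = 1 := by
      have := congrFun (congrFun h2 i) i
      simp only [Matrix.mul_apply, Matrix.one_apply_eq, Matrix.star_apply, star_trivial] at this
      simpa [dotProduct] using this
    have henorm : enorm' x ^ 2 = 1 := by
      rw [enorm', Real.sq_sqrt, hxx]
      rw [hxx]; norm_num
    have hq : x ⬝ᵥ B.mulVec x = (star U * B * U) i i := by
      simp only [Matrix.mul_apply, dotProduct, Matrix.mulVec, Matrix.star_apply, star_trivial,
        Finset.sum_mul, Finset.mul_sum]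
      rw [Finset.sum_comm]
      congr 1; ext j; congr 1; ext k; ring
    have := hB x
    rw [henorm, hq] at this
    linarith
  -- per-index inequality
  have hkey : ∀ i, (max lam0 (μ i) - μ i)^2 ≤ (C i i)^2 := by
    intro i
    have hCi : C i i = (star U * B * U) i i - μ i := by
      rw [hCdef, Matrix.mul_sub, Matrix.sub_mul, hAdiag]
      simp [Matrix.sub_apply, Matrix.diagonal_apply_eq]
    rcases le_total lam0 (μ i) with h | h
    · rw [max_eq_right h]; simp [sq_nonneg]
    · rw [max_eq_left h]
      have hb := hdiagB i
      rw [hCi]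
      apply pow_le_pow_left₀ (by linarith) (by linarith)
  calc frobNorm' (psiClip lam0 A - A)
      = Real.sqrt (∑ i, (max lam0 (μ i) - μ i)^2) := by rw [frobNorm', hS1]
    _ ≤ Real.sqrt (∑ i, ∑ j, (C j i)^2) := by
        apply Real.sqrt_le_sqrt
        apply Finset.sum_le_sum
        intro i _
        calc (max lam0 (μ i) - μ i)^2 ≤ (C i i)^2 := hkey i
          _ ≤ ∑ j, (C j i)^2 :=
            Finset.single_le_sum (f := fun j => (C j i)^2) (fun j _ => sq_nonneg _) (Finset.mem_univ i)
    _ = frobNorm' (B - A) := by rw [frobNorm', hS2]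
end

section
/- Let λ₀ > 0 and n ∈ ℕ with 4nλ₀ > 1. Let H, E ∈ ℝ^{d×d} be symmetric positive semi-definite matrices with ‖E‖_F ≤ 1/4. Set A = Ψ_{λ₀}(H, clip) and B = Ψ_{λ₀}(H + (1/n)E, clip). Then A and B are invertible and ‖A⁻¹ − B⁻¹‖ ≤ 1/(4nλ₀² − λ₀), where ‖·‖ denotes the operator norm. -/
set_option maxHeartbeats 1000000


open Matrix

/-- The `ℓ₂ → ℓ₂` operator norm of a matrix: `‖M‖ = sup_{‖x‖ ≤ 1} ‖Mx‖`. -/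
noncomputable def opNorm' {d : ℕ} (M : Matrix (Fin d) (Fin d) ℝ) : ℝ :=
  sSup {r : ℝ | ∃ x : Fin d → ℝ, enorm' x ≤ 1 ∧ r = enorm' (M.mulVec x)}

section Aux

variable {d : ℕ}

lemma aux_dot_self_nonneg (x : Fin d → ℝ) : 0 ≤ x ⬝ᵥ x :=
  Finset.sum_nonneg fun _ _ => mul_self_nonneg _

lemma aux_enorm'_nonneg (x : Fin d → ℝ) : 0 ≤ enorm' x := Real.sqrt_nonneg _

lemma aux_enorm'_le_mul_enorm' {z x : Fin d → ℝ} {c : ℝ} (hc : 0 ≤ c)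
    (h : z ⬝ᵥ z ≤ c ^ 2 * (x ⬝ᵥ x)) : enorm' z ≤ c * enorm' x := by
  rw [enorm', enorm']
  calc Real.sqrt (z ⬝ᵥ z) ≤ Real.sqrt (c ^ 2 * (x ⬝ᵥ x)) := Real.sqrt_le_sqrt h
  _ = c * Real.sqrt (x ⬝ᵥ x) := by
      rw [Real.sqrt_mul (sq_nonneg c), Real.sqrt_sq hc]

lemma aux_dot_mulVec_unitary {U : Matrix (Fin d) (Fin d) ℝ} (hU : Uᵀ * U = 1)
    (x : Fin d → ℝ) : (U *ᵥ x) ⬝ᵥ (U *ᵥ x) = x ⬝ᵥ x := by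
  rw [dotProduct_mulVec, ← mulVec_transpose, mulVec_mulVec, hU, one_mulVec]

lemma aux_diag_dot_le (ν : Fin d → ℝ) {c : ℝ} (hν : ∀ i, |ν i| ≤ c) (y : Fin d → ℝ) :
    (diagonal ν *ᵥ y) ⬝ᵥ (diagonal ν *ᵥ y) ≤ c ^ 2 * (y ⬝ᵥ y) := by
  simp only [dotProduct, mulVec_diagonal, Finset.mul_sum]
  refine Finset.sum_le_sum fun i _ => ?_
  have h1 : ν i ^ 2 ≤ c ^ 2 := by
    rw [← sq_abs]
    exact pow_le_pow_left₀ (abs_nonneg _) (hν i) 2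
  nlinarith [mul_self_nonneg (y i), h1]

lemma aux_enorm'_conj_mulVec_le {U : Matrix (Fin d) (Fin d) ℝ} (hU1 : Uᵀ * U = 1)
    (hU2 : U * Uᵀ = 1) {ν : Fin d → ℝ} {c : ℝ} (hc : 0 ≤ c) (hν : ∀ i, |ν i| ≤ c)
    (x : Fin d → ℝ) :
    enorm' ((U * diagonal ν * Uᵀ) *ᵥ x) ≤ c * enorm' x := by
  apply aux_enorm'_le_mul_enorm' hc
  rw [← mulVec_mulVec, ← mulVec_mulVec]
  rw [aux_dot_mulVec_unitary hU1]
  calc (diagonal ν *ᵥ (Uᵀ *ᵥ x)) ⬝ᵥ (diagonal ν *ᵥ (Uᵀ *ᵥ x))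
      ≤ c ^ 2 * ((Uᵀ *ᵥ x) ⬝ᵥ (Uᵀ *ᵥ x)) := aux_diag_dot_le ν hν _
  _ = c ^ 2 * (x ⬝ᵥ x) := by
      rw [aux_dot_mulVec_unitary (by rwa [transpose_transpose]) x]

lemma aux_trace_transpose_mul_self (M : Matrix (Fin d) (Fin d) ℝ) :
    trace (Mᵀ * M) = ∑ i, ∑ j, M i j ^ 2 := by
  rw [Matrix.trace]
  simp only [Matrix.diag_apply, Matrix.mul_apply, Matrix.transpose_apply]
  rw [Finset.sum_comm]
  simp_rw [pow_two]

lemma aux_trace_transpose_mul_self_nonneg (M : Matrix (Fin d) (Fin d) ℝ) :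
    0 ≤ trace (Mᵀ * M) := by
  rw [aux_trace_transpose_mul_self]
  exact Finset.sum_nonneg fun _ _ => Finset.sum_nonneg fun _ _ => sq_nonneg _

lemma aux_frobNorm'_nonneg (M : Matrix (Fin d) (Fin d) ℝ) : 0 ≤ frobNorm' M :=
  Real.sqrt_nonneg _

lemma aux_frobNorm'_sq (M : Matrix (Fin d) (Fin d) ℝ) :
    frobNorm' M ^ 2 = trace (Mᵀ * M) := by
  rw [frobNorm', Real.sq_sqrt (aux_trace_transpose_mul_self_nonneg M)]

lemma aux_enorm'_mulVec_le_frob (M : Matrix (Fin d) (Fin d) ℝ) (x : Fin d → ℝ) :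
    enorm' (M *ᵥ x) ≤ frobNorm' M * enorm' x := by
  apply aux_enorm'_le_mul_enorm' (aux_frobNorm'_nonneg M)
  rw [aux_frobNorm'_sq, aux_trace_transpose_mul_self]
  calc (M *ᵥ x) ⬝ᵥ (M *ᵥ x)
      = ∑ i, (∑ j, M i j * x j) * (∑ j, M i j * x j) := by
        simp [dotProduct, Matrix.mulVec]
  _ ≤ ∑ i, (∑ j, M i j ^ 2) * ∑ j, x j ^ 2 := by
        refine Finset.sum_le_sum fun i _ => ?_
        rw [← pow_two]
        exact Finset.sum_mul_sq_le_sq_mul_sq Finset.univ (fun j => M i j) x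
  _ = (∑ i, ∑ j, M i j ^ 2) * (x ⬝ᵥ x) := by
        rw [← Finset.sum_mul]
        congr 1
        simp [dotProduct, pow_two]

lemma aux_conj_diag_mul {U : Matrix (Fin d) (Fin d) ℝ} (hU : Uᵀ * U = 1)
    (p q : Fin d → ℝ) :
    (U * diagonal p * Uᵀ) * (U * diagonal q * Uᵀ)
      = U * diagonal (fun i => p i * q i) * Uᵀ := by
  have : (U * diagonal p * Uᵀ) * (U * diagonal q * Uᵀ)
      = U * (diagonal p * (Uᵀ * U) * diagonal q) * Uᵀ := by
    simp only [Matrix.mul_assoc]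
  rw [this, hU, mul_one, diagonal_mul_diagonal]

lemma aux_row_sq_sum {W : Matrix (Fin d) (Fin d) ℝ} (hW : W * Wᵀ = 1) (i : Fin d) :
    ∑ j, W i j ^ 2 = 1 := by
  have := congrFun (congrFun hW i) i
  simp only [Matrix.mul_apply, transpose_apply, Matrix.one_apply_eq] at this
  simpa [sq] using this

lemma aux_trace_conj_diag (p : Fin d → ℝ) {U : Matrix (Fin d) (Fin d) ℝ}
    (hU : Uᵀ * U = 1) : trace (U * diagonal p * Uᵀ) = ∑ i, p i := by
  rw [trace_mul_cycle, hU, Matrix.one_mul, trace_diagonal]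

lemma aux_trace_diag_conj_diag (p q : Fin d → ℝ) (W : Matrix (Fin d) (Fin d) ℝ) :
    trace (diagonal p * (W * diagonal q * Wᵀ)) = ∑ i, ∑ j, W i j ^ 2 * (p i * q j) := by
  rw [Matrix.trace]
  refine Finset.sum_congr rfl fun i _ => ?_
  rw [Matrix.diag_apply, Matrix.diagonal_mul, Matrix.mul_apply, Finset.mul_sum]
  refine Finset.sum_congr rfl fun j _ => ?_
  rw [Matrix.mul_diagonal, Matrix.transpose_apply]
  ring

lemma aux_trace_sq_conj_diff {U V : Matrix (Fin d) (Fin d) ℝ}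
    (hU1 : Uᵀ * U = 1) (hU2 : U * Uᵀ = 1) (hV1 : Vᵀ * V = 1) (hV2 : V * Vᵀ = 1)
    (p q : Fin d → ℝ) :
    trace (((U * diagonal p * Uᵀ) - (V * diagonal q * Vᵀ))ᵀ *
           ((U * diagonal p * Uᵀ) - (V * diagonal q * Vᵀ)))
      = ∑ i, ∑ j, ((Uᵀ * V) i j) ^ 2 * (p i - q j) ^ 2 := by
  set X := U * diagonal p * Uᵀ with hX
  set Y := V * diagonal q * Vᵀ with hY
  set W := Uᵀ * V with hW
  have hWrow : W * Wᵀ = 1 := by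
    rw [hW, transpose_mul, transpose_transpose, Matrix.mul_assoc, ← Matrix.mul_assoc V, hV2,
      Matrix.one_mul, hU1]
  have hXt : Xᵀ = X := by
    rw [hX]
    simp [transpose_mul, diagonal_transpose, Matrix.mul_assoc]
  have hYt : Yᵀ = Y := by
    rw [hY]
    simp [transpose_mul, diagonal_transpose, Matrix.mul_assoc]
  have hXX : trace (X * X) = ∑ i, p i ^ 2 := by
    rw [hX, aux_conj_diag_mul hU1, aux_trace_conj_diag _ hU1]
    simp [sq]
  have hYY : trace (Y * Y) = ∑ j, q j ^ 2 := by
    rw [hY, aux_conj_diag_mul hV1, aux_trace_conj_diag _ hV1]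
    simp [sq]
  have hXY : trace (X * Y) = ∑ i, ∑ j, W i j ^ 2 * (p i * q j) := by
    have h1 : X * Y = U * (diagonal p * (W * diagonal q * Wᵀ)) * Uᵀ := by
      rw [hX, hY, hW]
      simp only [transpose_mul, transpose_transpose, Matrix.mul_assoc]
      rw [hU2, Matrix.mul_one]
    rw [h1, trace_mul_cycle, ← Matrix.mul_assoc, hU1, Matrix.one_mul,
      aux_trace_diag_conj_diag]
  have expand : (X - Y)ᵀ * (X - Y) = X * X - X * Y - (Y * X - Y * Y) := by
    rw [transpose_sub, hXt, hYt, sub_mul, mul_sub, mul_sub]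
  rw [expand, trace_sub, trace_sub, trace_sub, trace_mul_comm Y X, hXX, hYY, hXY]
  have hsum1 : ∑ i, ∑ j, W i j ^ 2 * p i ^ 2 = ∑ i, p i ^ 2 := by
    refine Finset.sum_congr rfl fun i _ => ?_
    rw [← Finset.sum_mul, aux_row_sq_sum hWrow i, one_mul]
  have hsum2 : ∑ i, ∑ j, W i j ^ 2 * q j ^ 2 = ∑ j, q j ^ 2 := by
    rw [Finset.sum_comm]
    refine Finset.sum_congr rfl fun j _ => ?_
    have hcol : ∑ i, W i j ^ 2 = 1 := by
      have h2 : Wᵀ * (Wᵀ)ᵀ = 1 := by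
        rw [transpose_transpose, hW, transpose_mul, transpose_transpose, Matrix.mul_assoc,
          ← Matrix.mul_assoc U, hU2, Matrix.one_mul, hV1]
      have := aux_row_sq_sum h2 j
      simpa using this
    rw [← Finset.sum_mul, hcol, one_mul]
  have hterm : ∀ i : Fin d, ∀ j : Fin d, W i j ^ 2 * (p i - q j) ^ 2
      = W i j ^ 2 * p i ^ 2 + W i j ^ 2 * q j ^ 2 - 2 * (W i j ^ 2 * (p i * q j)) := by
    intro i j; ring
  calc ∑ i, p i ^ 2 - ∑ i, ∑ j, W i j ^ 2 * (p i * q j)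
        - (∑ i, ∑ j, W i j ^ 2 * (p i * q j) - ∑ j, q j ^ 2)
      = ∑ i, ∑ j, W i j ^ 2 * p i ^ 2 + ∑ i, ∑ j, W i j ^ 2 * q j ^ 2
        - 2 * ∑ i, ∑ j, W i j ^ 2 * (p i * q j) := by
        rw [hsum1, hsum2]; ring
  _ = ∑ i, ∑ j, W i j ^ 2 * (p i - q j) ^ 2 := by
        simp_rw [hterm, Finset.sum_sub_distrib, Finset.sum_add_distrib, Finset.mul_sum]

end Aux

/-- Let `λ₀ > 0` and `n ∈ ℕ` with `4nλ₀ > 1`. Let `H, E` be symmetric PSD with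
`‖E‖_F ≤ 1/4`, and set `A = Ψ_{λ₀}(H, clip)`, `B = Ψ_{λ₀}(H + (1/n)E, clip)`.
Then `A, B` are invertible and `‖A⁻¹ − B⁻¹‖ ≤ 1/(4nλ₀² − λ₀)` in the operator norm. -/
theorem psiClip_inverse_sensitivity {d : ℕ} (lam0 : ℝ) (hlam0 : 0 < lam0)
    (n : ℕ) (hn : 1 < 4 * (n : ℝ) * lam0)
    (H E : Matrix (Fin d) (Fin d) ℝ) (hH : H.PosSemidef) (hE : E.PosSemidef)
    (hEF : frobNorm' E ≤ 1 / 4) :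
    IsUnit (psiClip lam0 H) ∧ IsUnit (psiClip lam0 (H + ((1 : ℝ) / n) • E)) ∧
      opNorm' ((psiClip lam0 H)⁻¹ - (psiClip lam0 (H + ((1 : ℝ) / n) • E))⁻¹)
        ≤ 1 / (4 * n * lam0 ^ 2 - lam0) := by
  have hn0 : 0 < (n : ℝ) := by
    have hne : n ≠ 0 := by rintro rfl; norm_num at hn
    exact_mod_cast Nat.pos_of_ne_zero hne
  set H' := H + ((1 : ℝ) / n) • E with hH'def
  have hA : H.IsHermitian := hH.1
  have hsE : (((1 : ℝ) / n) • E).IsHermitian := by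
    show (((1 : ℝ) / n) • E)ᴴ = _
    rw [conjTranspose_smul, hE.1, star_trivial]
  have hB : H'.IsHermitian := hA.add hsE
  set U : Matrix (Fin d) (Fin d) ℝ := (hA.eigenvectorUnitary : Matrix (Fin d) (Fin d) ℝ)
    with hUdef
  set V : Matrix (Fin d) (Fin d) ℝ := (hB.eigenvectorUnitary : Matrix (Fin d) (Fin d) ℝ)
    with hVdef
  have hU1 : Uᵀ * U = 1 := by
    have := Unitary.coe_star_mul_self hA.eigenvectorUnitary
    rwa [star_eq_conjTranspose, conjTranspose_eq_transpose_of_trivial] at this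
  have hU2 : U * Uᵀ = 1 := by
    have := Unitary.coe_mul_star_self hA.eigenvectorUnitary
    rwa [Unitary.coe_star, star_eq_conjTranspose,
      conjTranspose_eq_transpose_of_trivial] at this
  have hV1 : Vᵀ * V = 1 := by
    have := Unitary.coe_star_mul_self hB.eigenvectorUnitary
    rwa [star_eq_conjTranspose, conjTranspose_eq_transpose_of_trivial] at this
  have hV2 : V * Vᵀ = 1 := by
    have := Unitary.coe_mul_star_self hB.eigenvectorUnitary
    rwa [Unitary.coe_star, star_eq_conjTranspose,
      conjTranspose_eq_transpose_of_trivial] at this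
  set lam := hA.eigenvalues with hlamdef
  set mu := hB.eigenvalues with hmudef
  have hHeq : H = U * diagonal lam * Uᵀ := by
    conv_lhs => rw [hA.spectral_theorem]
    rw [Unitary.conjStarAlgAut_apply, star_eq_conjTranspose, conjTranspose_eq_transpose_of_trivial]
    simp [RCLike.ofReal_real_eq_id]
    rfl
  have hH'eq : H' = V * diagonal mu * Vᵀ := by
    conv_lhs => rw [hB.spectral_theorem]
    rw [Unitary.conjStarAlgAut_apply, star_eq_conjTranspose, conjTranspose_eq_transpose_of_trivial]
    simp [RCLike.ofReal_real_eq_id]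
    rfl
  have hAeq : psiClip lam0 H = U * diagonal (fun i => max lam0 (lam i)) * Uᵀ := by
    rw [psiClip, hA.cfc_eq, Matrix.IsHermitian.cfc, Unitary.conjStarAlgAut_apply,
      star_eq_conjTranspose, conjTranspose_eq_transpose_of_trivial]
    simp only [RCLike.ofReal_real_eq_id, Function.comp_def, id_eq]
    rfl
  have hBeq : psiClip lam0 H' = V * diagonal (fun i => max lam0 (mu i)) * Vᵀ := by
    rw [psiClip, hB.cfc_eq, Matrix.IsHermitian.cfc, Unitary.conjStarAlgAut_apply,
      star_eq_conjTranspose, conjTranspose_eq_transpose_of_trivial]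
    simp only [RCLike.ofReal_real_eq_id, Function.comp_def, id_eq]
    rfl
  -- inverses
  have hflam : ∀ i, 0 < max lam0 (lam i) := fun i => lt_of_lt_of_le hlam0 (le_max_left _ _)
  have hfmu : ∀ i, 0 < max lam0 (mu i) := fun i => lt_of_lt_of_le hlam0 (le_max_left _ _)
  set CA := U * diagonal (fun i => (max lam0 (lam i))⁻¹) * Uᵀ with hCAdef
  set CB := V * diagonal (fun i => (max lam0 (mu i))⁻¹) * Vᵀ with hCBdef
  have hACA : psiClip lam0 H * CA = 1 := by
    rw [hAeq, hCAdef, aux_conj_diag_mul hU1]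
    have : (fun i => max lam0 (lam i) * (max lam0 (lam i))⁻¹) = fun _ : Fin d => (1 : ℝ) :=
      funext fun i => mul_inv_cancel₀ (hflam i).ne'
    rw [this, diagonal_one, Matrix.mul_one, hU2]
  have hCAA : CA * psiClip lam0 H = 1 := by
    rw [hAeq, hCAdef, aux_conj_diag_mul hU1]
    have : (fun i => (max lam0 (lam i))⁻¹ * max lam0 (lam i)) = fun _ : Fin d => (1 : ℝ) :=
      funext fun i => inv_mul_cancel₀ (hflam i).ne'
    rw [this, diagonal_one, Matrix.mul_one, hU2]
  have hBCB : psiClip lam0 H' * CB = 1 := by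
    rw [hBeq, hCBdef, aux_conj_diag_mul hV1]
    have : (fun i => max lam0 (mu i) * (max lam0 (mu i))⁻¹) = fun _ : Fin d => (1 : ℝ) :=
      funext fun i => mul_inv_cancel₀ (hfmu i).ne'
    rw [this, diagonal_one, Matrix.mul_one, hV2]
  have hCBB : CB * psiClip lam0 H' = 1 := by
    rw [hBeq, hCBdef, aux_conj_diag_mul hV1]
    have : (fun i => (max lam0 (mu i))⁻¹ * max lam0 (mu i)) = fun _ : Fin d => (1 : ℝ) :=
      funext fun i => inv_mul_cancel₀ (hfmu i).ne'
    rw [this, diagonal_one, Matrix.mul_one, hV2]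
  refine ⟨⟨⟨psiClip lam0 H, CA, hACA, hCAA⟩, rfl⟩,
    ⟨⟨psiClip lam0 H', CB, hBCB, hCBB⟩, rfl⟩, ?_⟩
  -- Frobenius bound on the difference of the clipped matrices
  have hdiff : ((1 : ℝ) / n) • E = V * diagonal mu * Vᵀ - U * diagonal lam * Uᵀ := by
    rw [← hH'eq, ← hHeq, hH'def, add_sub_cancel_left]
  have htermwise : ∀ i : Fin d, ∀ j : Fin d,
      ((Vᵀ * U) i j) ^ 2 * (max lam0 (mu i) - max lam0 (lam j)) ^ 2
        ≤ ((Vᵀ * U) i j) ^ 2 * (mu i - lam j) ^ 2 := by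
    intro i j
    refine mul_le_mul_of_nonneg_left ?_ (sq_nonneg _)
    have habs : |max lam0 (mu i) - max lam0 (lam j)| ≤ |mu i - lam j| := by
      rw [max_comm lam0 (mu i), max_comm lam0 (lam j)]
      exact abs_max_sub_max_le_abs _ _ _
    calc (max lam0 (mu i) - max lam0 (lam j)) ^ 2
        = |max lam0 (mu i) - max lam0 (lam j)| ^ 2 := (sq_abs _).symm
    _ ≤ |mu i - lam j| ^ 2 := pow_le_pow_left₀ (abs_nonneg _) habs 2
    _ = (mu i - lam j) ^ 2 := sq_abs _
  have hfrobdiff : frobNorm' (psiClip lam0 H' - psiClip lam0 H) ≤ 1 / (4 * n) := by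
    have h1 : trace ((psiClip lam0 H' - psiClip lam0 H)ᵀ * (psiClip lam0 H' - psiClip lam0 H))
        ≤ trace ((((1 : ℝ) / n) • E)ᵀ * (((1 : ℝ) / n) • E)) := by
      rw [hAeq, hBeq, aux_trace_sq_conj_diff hV1 hV2 hU1 hU2, hdiff,
        aux_trace_sq_conj_diff hV1 hV2 hU1 hU2]
      exact Finset.sum_le_sum fun i _ => Finset.sum_le_sum fun j _ => htermwise i j
    have h2 : trace ((((1 : ℝ) / n) • E)ᵀ * (((1 : ℝ) / n) • E))
        = ((1 : ℝ) / n) ^ 2 * trace (Eᵀ * E) := by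
      rw [transpose_smul, smul_mul_assoc, mul_smul_comm, smul_smul, trace_smul]
      rw [smul_eq_mul, pow_two]
    have h3 : frobNorm' (psiClip lam0 H' - psiClip lam0 H)
        ≤ Real.sqrt (((1 : ℝ) / n) ^ 2 * trace (Eᵀ * E)) := by
      rw [frobNorm']
      exact Real.sqrt_le_sqrt (h2 ▸ h1)
    have h4 : Real.sqrt (((1 : ℝ) / n) ^ 2 * trace (Eᵀ * E))
        = ((1 : ℝ) / n) * frobNorm' E := by
      rw [Real.sqrt_mul (sq_nonneg _), Real.sqrt_sq (by positivity), frobNorm']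
    calc frobNorm' (psiClip lam0 H' - psiClip lam0 H)
        ≤ ((1 : ℝ) / n) * frobNorm' E := by rw [← h4]; exact h3
    _ ≤ ((1 : ℝ) / n) * (1 / 4) :=
        mul_le_mul_of_nonneg_left hEF (by positivity)
    _ = 1 / (4 * n) := by
        rw [div_mul_div_comm, one_mul, mul_comm]
  -- pointwise operator bounds for the inverses
  have hCAbound : ∀ y : Fin d → ℝ, enorm' (CA *ᵥ y) ≤ lam0⁻¹ * enorm' y := by
    intro y
    refine aux_enorm'_conj_mulVec_le hU1 hU2 (by positivity) (fun i => ?_) y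
    rw [abs_of_pos (inv_pos.mpr (hflam i))]
    exact inv_anti₀ hlam0 (le_max_left _ _)
  have hCBbound : ∀ y : Fin d → ℝ, enorm' (CB *ᵥ y) ≤ lam0⁻¹ * enorm' y := by
    intro y
    refine aux_enorm'_conj_mulVec_le hV1 hV2 (by positivity) (fun i => ?_) y
    rw [abs_of_pos (inv_pos.mpr (hfmu i))]
    exact inv_anti₀ hlam0 (le_max_left _ _)
  -- the difference of the inverses
  have hDeq : (psiClip lam0 H)⁻¹ - (psiClip lam0 H')⁻¹
      = CA * ((psiClip lam0 H' - psiClip lam0 H) * CB) := by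
    rw [Matrix.inv_eq_right_inv hACA, Matrix.inv_eq_right_inv hBCB]
    rw [sub_mul, hBCB, mul_sub, Matrix.mul_one, ← Matrix.mul_assoc, hCAA, Matrix.one_mul]
  clear_value U V lam mu CA CB H'
  -- main bound
  have hdenom : 0 < 4 * (n : ℝ) * lam0 ^ 2 - lam0 := by nlinarith
  rw [opNorm']
  apply Real.sSup_le
  · rintro r hr
    obtain ⟨x, hx, rfl⟩ := hr
    have hchain : enorm' (((psiClip lam0 H)⁻¹ - (psiClip lam0 H')⁻¹) *ᵥ x)
        ≤ lam0⁻¹ * (1 / (4 * n) * (lam0⁻¹ * enorm' x)) := by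
      have hDvec : ((psiClip lam0 H)⁻¹ - (psiClip lam0 H')⁻¹) *ᵥ x
          = CA *ᵥ ((psiClip lam0 H' - psiClip lam0 H) *ᵥ (CB *ᵥ x)) := by
        rw [hDeq, mulVec_mulVec, mulVec_mulVec, Matrix.mul_assoc]
      rw [hDvec]
      have s1 : enorm' (CA *ᵥ ((psiClip lam0 H' - psiClip lam0 H) *ᵥ (CB *ᵥ x)))
          ≤ lam0⁻¹ * enorm' ((psiClip lam0 H' - psiClip lam0 H) *ᵥ (CB *ᵥ x)) :=
        hCAbound _
      have s2 : enorm' ((psiClip lam0 H' - psiClip lam0 H) *ᵥ (CB *ᵥ x))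
          ≤ frobNorm' (psiClip lam0 H' - psiClip lam0 H) * enorm' (CB *ᵥ x) :=
        aux_enorm'_mulVec_le_frob _ _
      have s3 : frobNorm' (psiClip lam0 H' - psiClip lam0 H) * enorm' (CB *ᵥ x)
          ≤ 1 / (4 * n) * (lam0⁻¹ * enorm' x) :=
        mul_le_mul hfrobdiff (hCBbound x) (aux_enorm'_nonneg _) (by positivity)
      refine s1.trans (mul_le_mul_of_nonneg_left (s2.trans s3) (by positivity))
    refine hchain.trans ?_
    have h5 : lam0⁻¹ * (1 / (4 * n) * (lam0⁻¹ * enorm' x))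
        ≤ lam0⁻¹ * (1 / (4 * n) * (lam0⁻¹ * 1)) := by
      have : lam0⁻¹ * enorm' x ≤ lam0⁻¹ * 1 := mul_le_mul_of_nonneg_left hx (by positivity)
      refine mul_le_mul_of_nonneg_left (mul_le_mul_of_nonneg_left this (by positivity))
        (by positivity)
    refine h5.trans ?_
    have h6 : lam0⁻¹ * (1 / (4 * n) * (lam0⁻¹ * 1)) = 1 / (4 * n * lam0 ^ 2) := by
      field_simp
    rw [h6]
    apply one_div_le_one_div_of_le hdenom
    nlinarith
  · positivity
end
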